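/- (Lemma 6.) Let M ∈ ℝ^{m×n} have rank ρ with SVD M = UΣVᵀ. Let Ω ⊆ [m]×[n] with weights p_ij ∈ (0,1], and suppose ‖P_T R_Ω P_T − P_T‖_op < 1. Then for every Z ∈ ℝ^{m×n} with Z_ij = 0 for all (i,j) ∈ Ω, ‖P_T(Z)‖_F ≤ (1 − ‖P_T R_Ω P_T − P_T‖_op)^{−1/2} · ( max_{(i,j) ∈ [m]×[n]} 1/√(p_ij) ) · ‖P_{T⊥}(Z)‖_*. -/

import Mathlib

open Matrix

noncomputable def frobNorm {m n : ℕ} (X : Matrix (Fin m) (Fin n) ℝ) : ℝ :=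
  Real.sqrt (∑ i, ∑ j, X i j ^ 2)

/-- Operator norm of a map on matrices, with respect to the Frobenius norm. -/
noncomputable def opNorm {m n : ℕ}
    (A : Matrix (Fin m) (Fin n) ℝ → Matrix (Fin m) (Fin n) ℝ) : ℝ :=
  ⨆ X, frobNorm (A X) / frobNorm X

/-- The nuclear norm `‖X‖_* = Tr((XᵀX)^{1/2})`, i.e. the sum of the singular values of `X`. -/
noncomputable def nuclearNorm {m n : ℕ} (X : Matrix (Fin m) (Fin n) ℝ) : ℝ :=
  ((Matrix.posSemidef_conjTranspose_mul_self X).1.eigenvectorUnitary.1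
    * diagonal (((↑) : ℝ → ℝ) ∘ Real.sqrt ∘ (Matrix.posSemidef_conjTranspose_mul_self X).1.eigenvalues)
    * (star (Matrix.posSemidef_conjTranspose_mul_self X).1.eigenvectorUnitary : Matrix (Fin n) (Fin n) ℝ)).trace

/-- The orthogonal projection `P_T(X) = UUᵀX + XVVᵀ − UUᵀXVVᵀ`. -/
noncomputable def PT {m n ρ : ℕ} (U : Matrix (Fin m) (Fin ρ) ℝ) (V : Matrix (Fin n) (Fin ρ) ℝ)
    (X : Matrix (Fin m) (Fin n) ℝ) : Matrix (Fin m) (Fin n) ℝ :=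
  U * Uᵀ * X + X * (V * Vᵀ) - U * Uᵀ * X * (V * Vᵀ)

open Classical in
/-- The sampling operator `R_Ω(X) = ∑_{(i,j)∈Ω} (1/p_ij) X_ij e_i e_jᵀ`. -/
noncomputable def RΩ {m n : ℕ} (Ω : Set (Fin m × Fin n)) (p : Fin m → Fin n → ℝ)
    (X : Matrix (Fin m) (Fin n) ℝ) : Matrix (Fin m) (Fin n) ℝ :=
  fun i j => if (i, j) ∈ Ω then (p i j)⁻¹ * X i j else 0

namespace S9
variable {m n ρ : ℕ}

noncomputable def inn (X Y : Matrix (Fin m) (Fin n) ℝ) : ℝ := ∑ i, ∑ j, X i j * Y i j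

lemma inn_comm (X Y : Matrix (Fin m) (Fin n) ℝ) : inn X Y = inn Y X := by
  simp [inn, mul_comm]

lemma inn_self_nonneg (X : Matrix (Fin m) (Fin n) ℝ) : 0 ≤ inn X X := by
  apply Finset.sum_nonneg; intro i _; apply Finset.sum_nonneg; intro j _; exact mul_self_nonneg _

lemma frob_nonneg (X : Matrix (Fin m) (Fin n) ℝ) : 0 ≤ frobNorm X := Real.sqrt_nonneg _

lemma frob_sq (X : Matrix (Fin m) (Fin n) ℝ) : frobNorm X ^ 2 = inn X X := by
  rw [frobNorm, Real.sq_sqrt]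
  · simp [inn, sq]
  · apply Finset.sum_nonneg; intro i _; apply Finset.sum_nonneg; intro j _; positivity

lemma frob_zero : frobNorm (0 : Matrix (Fin m) (Fin n) ℝ) = 0 := by
  simp [frobNorm]

lemma frob_pos {X : Matrix (Fin m) (Fin n) ℝ} (hX : X ≠ 0) : 0 < frobNorm X := by
  rcases lt_or_eq_of_le (frob_nonneg X) with h | h
  · exact h
  · exfalso; apply hX
    have h2 : inn X X = 0 := by rw [← frob_sq, ← h]; ring
    have h3 : ∀ i ∈ Finset.univ, ∀ j ∈ (Finset.univ : Finset (Fin n)), X i j * X i j = 0 := by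
      intro i hi j hj
      have hrow := (Finset.sum_eq_zero_iff_of_nonneg (fun i _ =>
        Finset.sum_nonneg (fun j _ => mul_self_nonneg (X i j)))).mp h2 i hi
      exact (Finset.sum_eq_zero_iff_of_nonneg (fun j _ => mul_self_nonneg (X i j))).mp hrow j hj
    funext i j
    exact mul_self_eq_zero.mp (h3 i (Finset.mem_univ i) j (Finset.mem_univ j))

lemma abs_inn_le (X Y : Matrix (Fin m) (Fin n) ℝ) : |inn X Y| ≤ frobNorm X * frobNorm Y := by
  have h : (inn X Y)^2 ≤ inn X X * inn Y Y := by
    have := Finset.sum_mul_sq_le_sq_mul_sq Finset.univ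
      (fun q : Fin m × Fin n => X q.1 q.2) (fun q : Fin m × Fin n => Y q.1 q.2)
    simpa [inn, sq, Fintype.sum_prod_type] using this
  calc |inn X Y| = Real.sqrt ((inn X Y)^2) := (Real.sqrt_sq_eq_abs _).symm
    _ ≤ Real.sqrt (frobNorm X ^2 * frobNorm Y ^2) := by
        rw [frob_sq, frob_sq]; exact Real.sqrt_le_sqrt h
    _ = frobNorm X * frobNorm Y := by
        rw [Real.sqrt_mul (sq_nonneg _), Real.sqrt_sq (frob_nonneg _), Real.sqrt_sq (frob_nonneg _)]

lemma inn_le (X Y : Matrix (Fin m) (Fin n) ℝ) : inn X Y ≤ frobNorm X * frobNorm Y :=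
  (le_abs_self _).trans (abs_inn_le X Y)

lemma inn_add_right (X Y Z : Matrix (Fin m) (Fin n) ℝ) :
    inn X (Y + Z) = inn X Y + inn X Z := by
  simp [inn, Matrix.add_apply, mul_add, Finset.sum_add_distrib]

lemma inn_neg_right (X Y : Matrix (Fin m) (Fin n) ℝ) : inn X (-Y) = - inn X Y := by
  simp [inn]

lemma inn_sub_right (X Y Z : Matrix (Fin m) (Fin n) ℝ) :
    inn X (Y - Z) = inn X Y - inn X Z := by
  simp [inn, Matrix.sub_apply, mul_sub, Finset.sum_sub_distrib]

lemma frob_neg (X : Matrix (Fin m) (Fin n) ℝ) : frobNorm (-X) = frobNorm X := by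
  simp [frobNorm]

lemma frob_add_le (X Y : Matrix (Fin m) (Fin n) ℝ) :
    frobNorm (X + Y) ≤ frobNorm X + frobNorm Y := by
  have h : frobNorm (X + Y) ^ 2 ≤ (frobNorm X + frobNorm Y)^2 := by
    rw [frob_sq]
    have e : inn (X + Y) (X + Y) = inn X X + 2 * inn X Y + inn Y Y := by
      rw [inn_add_right, inn_comm (X+Y) X, inn_comm (X+Y) Y, inn_add_right, inn_add_right]
      rw [inn_comm Y X]; ring
    rw [e, ← frob_sq, ← frob_sq]
    nlinarith [inn_le X Y, frob_nonneg X, frob_nonneg Y]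
  calc frobNorm (X + Y) = Real.sqrt (frobNorm (X + Y) ^2) := (Real.sqrt_sq (frob_nonneg _)).symm
    _ ≤ Real.sqrt ((frobNorm X + frobNorm Y)^2) := Real.sqrt_le_sqrt h
    _ = frobNorm X + frobNorm Y :=
        Real.sqrt_sq (add_nonneg (frob_nonneg _) (frob_nonneg _))

lemma frob_sub_le (X Y : Matrix (Fin m) (Fin n) ℝ) :
    frobNorm (X - Y) ≤ frobNorm X + frobNorm Y := by
  rw [sub_eq_add_neg]
  exact (frob_add_le X (-Y)).trans (by rw [frob_neg])

lemma inn_eq_trace (X Y : Matrix (Fin m) (Fin n) ℝ) : inn X Y = Matrix.trace (Xᵀ * Y) := by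
  rw [Matrix.trace, inn, Finset.sum_comm]
  simp [Matrix.diag, Matrix.mul_apply, Matrix.transpose_apply]

variable {U : Matrix (Fin m) (Fin ρ) ℝ} {V : Matrix (Fin n) (Fin ρ) ℝ}

lemma PT_idem (hU : Uᵀ * U = 1) (hV : Vᵀ * V = 1) (X : Matrix (Fin m) (Fin n) ℝ) :
    PT U V (PT U V X) = PT U V X := by
  have hU' : ∀ Y : Matrix (Fin ρ) (Fin n) ℝ, Uᵀ * (U * Y) = Y := by
    intro Y; rw [← Matrix.mul_assoc, hU, Matrix.one_mul]
  have hV' : ∀ k, ∀ Y : Matrix (Fin ρ) (Fin k) ℝ, Vᵀ * (V * Y) = Y := by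
    intro k Y; rw [← Matrix.mul_assoc, hV, Matrix.one_mul]
  simp only [PT, Matrix.mul_add, Matrix.add_mul, Matrix.mul_sub, Matrix.sub_mul]
  simp only [Matrix.mul_assoc, hU', hV']
  abel

lemma PT_selfadj (X Y : Matrix (Fin m) (Fin n) ℝ) :
    Matrix.trace (Xᵀ * PT U V Y) = Matrix.trace ((PT U V X)ᵀ * Y) := by
  have t1 : Matrix.trace (Xᵀ * (U * Uᵀ * Y)) = Matrix.trace ((U * Uᵀ * X)ᵀ * Y) := by
    simp only [Matrix.transpose_mul, Matrix.transpose_transpose, Matrix.mul_assoc]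
  have t2 : Matrix.trace (Xᵀ * (Y * (V * Vᵀ))) = Matrix.trace ((X * (V * Vᵀ))ᵀ * Y) := by
    simp only [Matrix.transpose_mul, Matrix.transpose_transpose]
    rw [← Matrix.mul_assoc Xᵀ Y, Matrix.trace_mul_comm]
    simp only [Matrix.mul_assoc]
  have t3 : Matrix.trace (Xᵀ * (U * Uᵀ * Y * (V * Vᵀ))) =
      Matrix.trace ((U * Uᵀ * X * (V * Vᵀ))ᵀ * Y) := by
    simp only [Matrix.transpose_mul, Matrix.transpose_transpose]
    rw [show Xᵀ * (U * Uᵀ * Y * (V * Vᵀ)) = (Xᵀ * (U * Uᵀ * Y)) * (V * Vᵀ) by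
      simp only [Matrix.mul_assoc], Matrix.trace_mul_comm]
    simp only [Matrix.mul_assoc]
  simp only [PT, Matrix.mul_add, Matrix.mul_sub, Matrix.transpose_add, Matrix.transpose_sub,
    Matrix.add_mul, Matrix.sub_mul, Matrix.trace_add, Matrix.trace_sub, t1, t2, t3]

lemma inn_PT (X Y : Matrix (Fin m) (Fin n) ℝ) :
    inn X (PT U V Y) = inn (PT U V X) Y := by
  rw [inn_eq_trace, inn_eq_trace, PT_selfadj]

lemma PT_zero : PT U V (0 : Matrix (Fin m) (Fin n) ℝ) = 0 := by
  simp [PT]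

lemma frob_PT_le (hU : Uᵀ * U = 1) (hV : Vᵀ * V = 1) (X : Matrix (Fin m) (Fin n) ℝ) :
    frobNorm (PT U V X) ≤ frobNorm X := by
  set W := PT U V X with hWdef
  have h : frobNorm W ^ 2 ≤ frobNorm W * frobNorm X := by
    rw [frob_sq]
    calc inn W W = inn W (PT U V X) := by rw [← hWdef]
      _ = inn (PT U V W) X := inn_PT W X
      _ = inn W X := by rw [hWdef, PT_idem hU hV]
      _ ≤ frobNorm W * frobNorm X := inn_le W X
  rcases eq_or_lt_of_le (frob_nonneg W) with h0 | h0
  · rw [← h0]; exact frob_nonneg X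
  · nlinarith

variable {Ω : Set (Fin m × Fin n)} {p : Fin m → Fin n → ℝ}

open Classical in
noncomputable def w (Ω : Set (Fin m × Fin n)) (p : Fin m → Fin n → ℝ) (i : Fin m) (j : Fin n) : ℝ :=
  if (i, j) ∈ Ω then (p i j)⁻¹ else 0

lemma w_nonneg (hp0 : ∀ i j, 0 < p i j) (i : Fin m) (j : Fin n) : 0 ≤ w Ω p i j := by
  rw [w]; split
  · exact (inv_nonneg).mpr (hp0 i j).le
  · exact le_refl 0

lemma RΩ_apply (X : Matrix (Fin m) (Fin n) ℝ) (i : Fin m) (j : Fin n) :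
    RΩ Ω p X i j = w Ω p i j * X i j := by
  rw [RΩ, w]; split <;> simp

lemma RΩ_add (X Y : Matrix (Fin m) (Fin n) ℝ) :
    RΩ Ω p (X + Y) = RΩ Ω p X + RΩ Ω p Y := by
  funext i j
  simp only [Matrix.add_apply, RΩ_apply, mul_add]

lemma RΩ_zero : RΩ Ω p (0 : Matrix (Fin m) (Fin n) ℝ) = 0 := by
  funext i j; simp [RΩ_apply]

lemma inn_RΩ (X Y : Matrix (Fin m) (Fin n) ℝ) :
    inn X (RΩ Ω p Y) = ∑ i, ∑ j, w Ω p i j * (X i j * Y i j) := by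
  simp only [inn, RΩ_apply]; congr 1; funext i; congr 1; funext j; ring

lemma inn_RΩ_self_nonneg (hp0 : ∀ i j, 0 < p i j) (X : Matrix (Fin m) (Fin n) ℝ) :
    0 ≤ inn X (RΩ Ω p X) := by
  rw [inn_RΩ]
  apply Finset.sum_nonneg; intro i _; apply Finset.sum_nonneg; intro j _
  exact mul_nonneg (w_nonneg hp0 i j) (mul_self_nonneg _)

lemma inn_RΩ_cs (hp0 : ∀ i j, 0 < p i j) (X Y : Matrix (Fin m) (Fin n) ℝ) :
    (inn X (RΩ Ω p Y))^2 ≤ inn X (RΩ Ω p X) * inn Y (RΩ Ω p Y) := by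
  have key := Finset.sum_mul_sq_le_sq_mul_sq Finset.univ
    (fun q : Fin m × Fin n => Real.sqrt (w Ω p q.1 q.2) * X q.1 q.2)
    (fun q : Fin m × Fin n => Real.sqrt (w Ω p q.1 q.2) * Y q.1 q.2)
  have e1 : ∀ q : Fin m × Fin n,
      (Real.sqrt (w Ω p q.1 q.2) * X q.1 q.2) * (Real.sqrt (w Ω p q.1 q.2) * Y q.1 q.2)
      = w Ω p q.1 q.2 * (X q.1 q.2 * Y q.1 q.2) := by
    intro q
    rw [show (Real.sqrt (w Ω p q.1 q.2) * X q.1 q.2) * (Real.sqrt (w Ω p q.1 q.2) * Y q.1 q.2)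
      = (Real.sqrt (w Ω p q.1 q.2) * Real.sqrt (w Ω p q.1 q.2)) * (X q.1 q.2 * Y q.1 q.2) by ring,
      Real.mul_self_sqrt (w_nonneg hp0 q.1 q.2)]
  have e2 : ∀ (Z : Matrix (Fin m) (Fin n) ℝ) (q : Fin m × Fin n),
      (Real.sqrt (w Ω p q.1 q.2) * Z q.1 q.2)^2 = w Ω p q.1 q.2 * (Z q.1 q.2 * Z q.1 q.2) := by
    intro Z q
    rw [mul_pow, Real.sq_sqrt (w_nonneg hp0 q.1 q.2)]; ring
  simp only [e1, e2] at key
  rw [inn_RΩ, inn_RΩ, inn_RΩ]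
  simpa [Fintype.sum_prod_type] using key

lemma inn_RΩ_self_le (hp0 : ∀ i j, 0 < p i j) {B : ℝ} (hB : ∀ i j, w Ω p i j ≤ B)
    (Y : Matrix (Fin m) (Fin n) ℝ) :
    inn Y (RΩ Ω p Y) ≤ B * frobNorm Y ^ 2 := by
  have h : frobNorm Y ^2 = ∑ i, ∑ j, Y i j * Y i j := by
    rw [frobNorm, Real.sq_sqrt]
    · congr 1; funext i; congr 1; funext j; ring
    · apply Finset.sum_nonneg; intro i _; apply Finset.sum_nonneg; intro j _; positivity
  rw [inn_RΩ, h, Finset.mul_sum]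
  apply Finset.sum_le_sum; intro i _
  rw [Finset.mul_sum]
  apply Finset.sum_le_sum; intro j _
  exact mul_le_mul_of_nonneg_right (hB i j) (mul_self_nonneg _)

lemma frob_RΩ_le (hp0 : ∀ i j, 0 < p i j) {K : ℝ} (hK0 : 0 ≤ K) (hK : ∀ i j, w Ω p i j ≤ K)
    (X : Matrix (Fin m) (Fin n) ℝ) :
    frobNorm (RΩ Ω p X) ≤ K * frobNorm X := by
  have h : ∑ i, ∑ j, (RΩ Ω p X i j)^2 ≤ K^2 * ∑ i, ∑ j, (X i j)^2 := by
    rw [Finset.mul_sum]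
    apply Finset.sum_le_sum; intro i _
    rw [Finset.mul_sum]
    apply Finset.sum_le_sum; intro j _
    rw [RΩ_apply, mul_pow]
    have := w_nonneg hp0 (Ω := Ω) (p := p) i j
    have h2 : w Ω p i j ^2 ≤ K^2 := by nlinarith [hK i j]
    exact mul_le_mul_of_nonneg_right h2 (sq_nonneg _)
  calc frobNorm (RΩ Ω p X) ≤ Real.sqrt (K^2 * ∑ i, ∑ j, (X i j)^2) := Real.sqrt_le_sqrt h
    _ = K * frobNorm X := by
        rw [Real.sqrt_mul (sq_nonneg _), Real.sqrt_sq hK0, frobNorm]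

lemma opNorm_bdd {A : Matrix (Fin m) (Fin n) ℝ → Matrix (Fin m) (Fin n) ℝ} {K : ℝ}
    (hA0 : A 0 = 0) (hbdd : ∀ X, frobNorm (A X) ≤ K * frobNorm X) :
    BddAbove (Set.range fun X => frobNorm (A X) / frobNorm X) := by
  refine ⟨max K 0, ?_⟩
  rintro _ ⟨X, rfl⟩
  by_cases hX : X = 0
  · subst hX; simp [hA0, frob_zero]
  · have h1 := frob_pos hX
    exact le_max_of_le_left ((div_le_iff₀ h1).mpr (hbdd X))

lemma opNorm_le_mul {A : Matrix (Fin m) (Fin n) ℝ → Matrix (Fin m) (Fin n) ℝ} {K : ℝ}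
    (hA0 : A 0 = 0) (hbdd : ∀ X, frobNorm (A X) ≤ K * frobNorm X) :
    ∀ X, frobNorm (A X) ≤ opNorm A * frobNorm X := by
  intro X
  by_cases hX : X = 0
  · subst hX; simp [hA0, frob_zero]
  · have h1 := frob_pos hX
    have h2 : frobNorm (A X) / frobNorm X ≤ opNorm A := le_ciSup (opNorm_bdd hA0 hbdd) X
    calc frobNorm (A X) = (frobNorm (A X) / frobNorm X) * frobNorm X := by field_simp
      _ ≤ opNorm A * frobNorm X := mul_le_mul_of_nonneg_right h2 (frob_nonneg X)

lemma opNorm_nonneg {A : Matrix (Fin m) (Fin n) ℝ → Matrix (Fin m) (Fin n) ℝ} {K : ℝ}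
    (hA0 : A 0 = 0) (hbdd : ∀ X, frobNorm (A X) ≤ K * frobNorm X) : 0 ≤ opNorm A := by
  have := le_ciSup (opNorm_bdd hA0 hbdd) (0 : Matrix (Fin m) (Fin n) ℝ)
  simp [hA0, frob_zero] at this
  exact this

lemma psd_exists_B {k : ℕ} {N : Matrix (Fin k) (Fin k) ℝ} (hP : N.PosSemidef) :
    ∃ B : Matrix (Fin k) (Fin k) ℝ, N = Bᴴ * B := by
  refine ⟨diagonal (Real.sqrt ∘ hP.1.eigenvalues) * (star hP.1.eigenvectorUnitary : Matrix _ _ ℝ), ?_⟩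
  have hdd : diagonal (Real.sqrt ∘ hP.1.eigenvalues) * diagonal (Real.sqrt ∘ hP.1.eigenvalues)
      = diagonal (RCLike.ofReal ∘ hP.1.eigenvalues) := by
    rw [Matrix.diagonal_mul_diagonal]
    congr 1; funext i
    simp [Real.mul_self_sqrt (hP.eigenvalues_nonneg i)]
  conv_lhs => rw [hP.1.spectral_theorem, Unitary.conjStarAlgAut_apply]
  simp only [Unitary.coe_star, Matrix.star_eq_conjTranspose, Matrix.conjTranspose_mul,
    Matrix.conjTranspose_conjTranspose, Matrix.diagonal_conjTranspose, star_trivial]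
  rw [← hdd]
  simp only [Matrix.mul_assoc]

lemma psd_helper {k : ℕ} {N : Matrix (Fin k) (Fin k) ℝ} (hP : N.PosSemidef) :
    0 ≤ N.trace ∧ ∑ i, ∑ j, N i j * N j i ≤ N.trace ^ 2 := by
  obtain ⟨B, hB⟩ := psd_exists_B hP
  subst hB
  have hentry : ∀ i j, (Bᴴ * B) i j = ∑ l, B l i * B l j := by
    intro i j; simp [Matrix.mul_apply, Matrix.conjTranspose_apply]
  have hdiag : ∀ i, 0 ≤ (Bᴴ * B) i i := by
    intro i; rw [hentry]
    exact Finset.sum_nonneg fun l _ => mul_self_nonneg _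
  constructor
  · exact Finset.sum_nonneg fun i _ => hdiag i
  · have hsym : ∀ i j, (Bᴴ * B) j i = (Bᴴ * B) i j := by
      intro i j; rw [hentry, hentry]
      exact Finset.sum_congr rfl fun l _ => mul_comm _ _
    have hsq : ∀ i j, (Bᴴ * B) i j * (Bᴴ * B) j i ≤ (Bᴴ * B) i i * (Bᴴ * B) j j := by
      intro i j
      rw [hsym i j, ← sq, hentry, hentry, hentry]
      exact (Finset.sum_mul_sq_le_sq_mul_sq Finset.univ _ _).trans_eq (by
        congr 1 <;> · congr 1; funext l; ring)
    calc ∑ i, ∑ j, (Bᴴ * B) i j * (Bᴴ * B) j i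
        ≤ ∑ i, ∑ j, (Bᴴ * B) i i * (Bᴴ * B) j j :=
          Finset.sum_le_sum fun i _ => Finset.sum_le_sum fun j _ => hsq i j
      _ = (Bᴴ * B).trace ^ 2 := by
          rw [Matrix.trace, sq, Finset.sum_mul_sum]
          simp [Matrix.diag_apply]

noncomputable def nucMat (X : Matrix (Fin m) (Fin n) ℝ) : Matrix (Fin n) (Fin n) ℝ :=
  (Matrix.posSemidef_conjTranspose_mul_self X).1.eigenvectorUnitary.1
    * diagonal (((↑) : ℝ → ℝ) ∘ Real.sqrt ∘ (Matrix.posSemidef_conjTranspose_mul_self X).1.eigenvalues)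
    * (star (Matrix.posSemidef_conjTranspose_mul_self X).1.eigenvectorUnitary : Matrix (Fin n) (Fin n) ℝ)

lemma nucMat_psd (X : Matrix (Fin m) (Fin n) ℝ) : (nucMat X).PosSemidef := by
  have hd : (diagonal (((↑) : ℝ → ℝ) ∘ Real.sqrt ∘
      (Matrix.posSemidef_conjTranspose_mul_self X).1.eigenvalues)).PosSemidef :=
    Matrix.PosSemidef.diagonal (fun i => Real.sqrt_nonneg _)
  have := hd.mul_mul_conjTranspose_same
    ((Matrix.posSemidef_conjTranspose_mul_self X).1.eigenvectorUnitary.1)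
  rw [nucMat, Matrix.star_eq_conjTranspose]
  exact this

lemma nucMat_mul_self (X : Matrix (Fin m) (Fin n) ℝ) : nucMat X * nucMat X = Xᴴ * X := by
  have hP := Matrix.posSemidef_conjTranspose_mul_self X
  conv_rhs => rw [hP.1.spectral_theorem, Unitary.conjStarAlgAut_apply]
  have hu : (star hP.1.eigenvectorUnitary : Matrix (Fin n) (Fin n) ℝ)
      * hP.1.eigenvectorUnitary.1 = 1 := by simp
  have hdd : diagonal (((↑) : ℝ → ℝ) ∘ Real.sqrt ∘ hP.1.eigenvalues)
      * diagonal (((↑) : ℝ → ℝ) ∘ Real.sqrt ∘ hP.1.eigenvalues)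
      = diagonal (RCLike.ofReal ∘ hP.1.eigenvalues) := by
    rw [Matrix.diagonal_mul_diagonal]
    congr 1; funext i
    simp
    exact Real.mul_self_sqrt (hP.eigenvalues_nonneg i)
  calc nucMat X * nucMat X
      = hP.1.eigenvectorUnitary.1 * (diagonal (((↑) : ℝ → ℝ) ∘ Real.sqrt ∘ hP.1.eigenvalues)
        * ((star hP.1.eigenvectorUnitary : Matrix (Fin n) (Fin n) ℝ) * hP.1.eigenvectorUnitary.1)
        * diagonal (((↑) : ℝ → ℝ) ∘ Real.sqrt ∘ hP.1.eigenvalues))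
        * (star hP.1.eigenvectorUnitary : Matrix (Fin n) (Fin n) ℝ) := by
        simp only [nucMat, Matrix.mul_assoc]
    _ = _ := by rw [hu, Matrix.mul_one, hdd]

lemma nuclear_nonneg (Y : Matrix (Fin m) (Fin n) ℝ) : 0 ≤ nuclearNorm Y :=
  (psd_helper (nucMat_psd Y)).1

lemma frob_le_nuclear (Y : Matrix (Fin m) (Fin n) ℝ) : frobNorm Y ≤ nuclearNorm Y := by
  have hP := nucMat_psd Y
  have hNN := nucMat_mul_self Y
  have hfrob2 : frobNorm Y ^2 = ∑ i, ∑ j,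
      nucMat Y i j *
      nucMat Y j i := by
    have h1 : frobNorm Y ^2 = Matrix.trace (Yᴴ * Y) := by
      rw [frobNorm, Real.sq_sqrt (by positivity), Matrix.trace, Finset.sum_comm]
      simp only [Matrix.diag_apply, Matrix.mul_apply, Matrix.conjTranspose_apply, star_trivial]
      congr 1; funext i; congr 1; funext j; ring
    rw [h1]
    conv_lhs => rw [← hNN]
    simp only [Matrix.trace, Matrix.diag_apply, Matrix.mul_apply]
  have hmain : frobNorm Y ^2 ≤ nuclearNorm Y ^2 := by
    rw [hfrob2, nuclearNorm]
    exact (psd_helper hP).2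
  calc frobNorm Y = Real.sqrt (frobNorm Y ^2) := (Real.sqrt_sq (frob_nonneg _)).symm
    _ ≤ Real.sqrt (nuclearNorm Y ^2) := Real.sqrt_le_sqrt hmain
    _ = nuclearNorm Y := Real.sqrt_sq (nuclear_nonneg _)

end S9

set_option maxHeartbeats 1000000 in
/-- (Lemma 6.) Let `M = UΣVᵀ ∈ ℝ^{m×n}` have rank `ρ`, `Ω ⊆ [m]×[n]` with weights
`p_ij ∈ (0,1]`, and suppose `‖P_T R_Ω P_T − P_T‖_op < 1`. Then for every `Z` vanishing on `Ω`,
`‖P_T(Z)‖_F ≤ (1 − ‖P_T R_Ω P_T − P_T‖_op)^{−1/2} · (max_{i,j} 1/√p_ij) · ‖P_{T⊥}(Z)‖_*`. -/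
theorem stmt_9 (m n ρ : ℕ) (hm : 0 < m) (hn : 0 < n)
    (M : Matrix (Fin m) (Fin n) ℝ) (hrank : M.rank = ρ)
    (U : Matrix (Fin m) (Fin ρ) ℝ) (V : Matrix (Fin n) (Fin ρ) ℝ) (σ : Fin ρ → ℝ)
    (hU : Uᵀ * U = 1) (hV : Vᵀ * V = 1) (hσ : ∀ k, 0 < σ k)
    (hM : M = U * Matrix.diagonal σ * Vᵀ)
    (Ω : Set (Fin m × Fin n)) (p : Fin m → Fin n → ℝ)
    (hp0 : ∀ i j, 0 < p i j) (hp1 : ∀ i j, p i j ≤ 1)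
    (hop : opNorm (fun X => PT U V (RΩ Ω p (PT U V X)) - PT U V X) < 1) :
    ∀ Z : Matrix (Fin m) (Fin n) ℝ, (∀ i j, (i, j) ∈ Ω → Z i j = 0) →
      frobNorm (PT U V Z)
        ≤ (Real.sqrt (1 - opNorm (fun X => PT U V (RΩ Ω p (PT U V X)) - PT U V X)))⁻¹
          * (⨆ i : Fin m, ⨆ j : Fin n, 1 / Real.sqrt (p i j))
          * nuclearNorm (Z - PT U V Z) := by
  intro Z hZ
  set A : Matrix (Fin m) (Fin n) ℝ → Matrix (Fin m) (Fin n) ℝ :=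
    fun X => PT U V (RΩ Ω p (PT U V X)) - PT U V X with hA
  set K : ℝ := ∑ i, ∑ j, (p i j)⁻¹ with hKdef
  have hKw : ∀ i j, S9.w Ω p i j ≤ K := by
    intro i j
    have hij : (p i j)⁻¹ ≤ K := by
      rw [hKdef]
      calc (p i j)⁻¹ ≤ ∑ j', (p i j')⁻¹ :=
            Finset.single_le_sum (fun j' _ => (inv_nonneg).mpr (hp0 i j').le) (Finset.mem_univ j)
        _ ≤ ∑ i', ∑ j', (p i' j')⁻¹ :=
            Finset.single_le_sum (f := fun i' => ∑ j', (p i' j')⁻¹)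
              (fun i' _ => Finset.sum_nonneg fun j' _ => (inv_nonneg).mpr (hp0 i' j').le)
              (Finset.mem_univ i)
    rw [S9.w]; split
    · exact hij
    · exact le_trans ((inv_nonneg).mpr (hp0 i j).le) hij
  have hK0 : (0:ℝ) ≤ K := le_trans (S9.w_nonneg hp0 ⟨0,hm⟩ ⟨0,hn⟩) (hKw _ _)
  have hA0 : A 0 = 0 := by
    rw [hA]; simp only [S9.PT_zero, S9.RΩ_zero, sub_zero]
  have hAbdd : ∀ X, frobNorm (A X) ≤ (K + 1) * frobNorm X := by
    intro X
    have t1 := S9.frob_sub_le (PT U V (RΩ Ω p (PT U V X))) (PT U V X)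
    have t2 := S9.frob_PT_le hU hV (RΩ Ω p (PT U V X))
    have t3 := S9.frob_PT_le hU hV X
    have t4 := S9.frob_RΩ_le hp0 hK0 hKw (PT U V X)
    have t6 : K * frobNorm (PT U V X) ≤ K * frobNorm X := mul_le_mul_of_nonneg_left t3 hK0
    have : frobNorm (A X) = frobNorm (PT U V (RΩ Ω p (PT U V X)) - PT U V X) := by rw [hA]
    rw [this]; linarith
  set δ : ℝ := opNorm A with hδdef
  have hδ0 : 0 ≤ δ := S9.opNorm_nonneg hA0 hAbdd
  have hδle : ∀ X, frobNorm (A X) ≤ δ * frobNorm X := S9.opNorm_le_mul hA0 hAbdd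
  have h1δ : 0 < 1 - δ := sub_pos.mpr hop
  set C : ℝ := ⨆ i : Fin m, ⨆ j : Fin n, 1 / Real.sqrt (p i j) with hC
  have hCij : ∀ i j, 1 / Real.sqrt (p i j) ≤ C := by
    intro i j
    have hbj : ∀ i : Fin m, BddAbove (Set.range fun j : Fin n => 1 / Real.sqrt (p i j)) :=
      fun i => Set.Finite.bddAbove (Set.finite_range _)
    have hbi : BddAbove (Set.range fun i : Fin m => ⨆ j, 1 / Real.sqrt (p i j)) :=
      Set.Finite.bddAbove (Set.finite_range _)
    exact (le_ciSup (hbj i) j).trans (le_ciSup hbi i)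
  have hC0 : 0 ≤ C := le_trans (by positivity) (hCij ⟨0,hm⟩ ⟨0,hn⟩)
  have hwC : ∀ i j, S9.w Ω p i j ≤ C^2 := by
    intro i j
    rw [S9.w]; split
    · have h1 : (1 / Real.sqrt (p i j))^2 = (p i j)⁻¹ := by
        rw [div_pow, one_pow, Real.sq_sqrt (hp0 i j).le, one_div]
      rw [← h1]
      exact pow_le_pow_left₀ (by positivity) (hCij i j) 2
    · positivity
  set W := PT U V Z with hW
  set Y := Z - W with hY
  have hPW : PT U V W = W := by rw [hW]; exact S9.PT_idem hU hV Z
  have hZWY : W + Y = Z := by rw [hY]; abel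
  have hRZ : RΩ Ω p Z = 0 := by
    funext i j
    rw [S9.RΩ_apply, S9.w]
    simp only [Matrix.zero_apply]
    split
    · rename_i h; rw [hZ i j h, mul_zero]
    · rw [zero_mul]
  have hRW : RΩ Ω p W = - RΩ Ω p Y := by
    have h : RΩ Ω p W + RΩ Ω p Y = 0 := by rw [← S9.RΩ_add, hZWY, hRZ]
    exact eq_neg_of_add_eq_zero_left h
  have hAW : A W = PT U V (RΩ Ω p W) - W := by
    simp only [hA, hPW]
  have e1 : S9.inn W (PT U V (RΩ Ω p W)) = S9.inn W (RΩ Ω p W) := by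
    rw [S9.inn_PT, hPW]
  have e2 : S9.inn W (A W) = S9.inn W (RΩ Ω p W) - S9.inn W W := by
    rw [hAW, S9.inn_sub_right, e1]
  have e3 : - (δ * (frobNorm W * frobNorm W)) ≤ S9.inn W (A W) := by
    have h1 := S9.abs_inn_le W (A W)
    have h2 := hδle W
    have h3 := neg_abs_le (S9.inn W (A W))
    nlinarith [S9.frob_nonneg W, S9.frob_nonneg (A W)]
  have hWW : S9.inn W W = frobNorm W ^ 2 := (S9.frob_sq W).symm
  have key1 : (1 - δ) * frobNorm W ^2 ≤ S9.inn W (RΩ Ω p W) := by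
    have hf : frobNorm W * frobNorm W = frobNorm W ^ 2 := by ring
    rw [hf] at e3
    linarith [e2, e3, hWW]
  have hS0 : 0 ≤ S9.inn W (RΩ Ω p W) := S9.inn_RΩ_self_nonneg hp0 W
  have hT0 : 0 ≤ S9.inn Y (RΩ Ω p Y) := S9.inn_RΩ_self_nonneg hp0 Y
  have hCS := S9.inn_RΩ_cs (Ω := Ω) hp0 W Y
  have hSeq : S9.inn W (RΩ Ω p W) = - S9.inn W (RΩ Ω p Y) := by
    rw [hRW]; exact S9.inn_neg_right W (RΩ Ω p Y)
  have key2 : S9.inn W (RΩ Ω p W) ≤ S9.inn Y (RΩ Ω p Y) := by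
    rcases eq_or_lt_of_le hS0 with h | h
    · rw [← h]; exact hT0
    · have h4 : (S9.inn W (RΩ Ω p W))^2 ≤ S9.inn W (RΩ Ω p W) * S9.inn Y (RΩ Ω p Y) := by
        calc (S9.inn W (RΩ Ω p W))^2 = (S9.inn W (RΩ Ω p Y))^2 := by rw [hSeq]; ring
          _ ≤ S9.inn W (RΩ Ω p W) * S9.inn Y (RΩ Ω p Y) := hCS
      nlinarith [h, h4]
  have key3 := S9.inn_RΩ_self_le hp0 hwC Y
  have key4 := S9.frob_le_nuclear Y
  have hnuc0 := S9.nuclear_nonneg Y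
  have keyA : (1 - δ) * frobNorm W ^2 ≤ C^2 * nuclearNorm Y^2 := by
    have h5 : C^2 * frobNorm Y^2 ≤ C^2 * nuclearNorm Y^2 :=
      mul_le_mul_of_nonneg_left (pow_le_pow_left₀ (S9.frob_nonneg Y) key4 2) (sq_nonneg C)
    linarith [key1, key2, key3]
  have hR0 : 0 ≤ (Real.sqrt (1 - δ))⁻¹ * C * nuclearNorm Y :=
    mul_nonneg (mul_nonneg (inv_nonneg.mpr (Real.sqrt_nonneg _)) hC0) hnuc0
  have hRsq : ((Real.sqrt (1 - δ))⁻¹ * C * nuclearNorm Y)^2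
      = (1-δ)⁻¹ * (C^2 * nuclearNorm Y^2) := by
    rw [mul_pow, mul_pow, ← Real.sqrt_inv,
      Real.sq_sqrt (by positivity : (0:ℝ) ≤ (1-δ)⁻¹)]
    ring
  have hfin : frobNorm W ^2 ≤ ((Real.sqrt (1 - δ))⁻¹ * C * nuclearNorm Y)^2 := by
    rw [hRsq]
    have h6 := mul_le_mul_of_nonneg_left keyA (inv_nonneg.mpr h1δ.le)
    rwa [← mul_assoc, inv_mul_cancel₀ (ne_of_gt h1δ), one_mul] at h6
  calc frobNorm W = Real.sqrt (frobNorm W ^2) := (Real.sqrt_sq (S9.frob_nonneg _)).symm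
    _ ≤ Real.sqrt (((Real.sqrt (1 - δ))⁻¹ * C * nuclearNorm Y)^2) := Real.sqrt_le_sqrt hfin
    _ = (Real.sqrt (1 - δ))⁻¹ * C * nuclearNorm Y := Real.sqrt_sq hR0
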